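/- (Type B_N Weyl denominator formula) For any N nonzero complex numbers z₁, …, z_N, det_{1≤j,k≤N}( z_k^{j-N} − z_k^{N+1-j} ) = ∏_{ℓ=1}^{N} z_ℓ^{1-N} (1 − z_ℓ) · ∏_{1≤j<k≤N} (z_k − z_j)(1 − z_j z_k). -/

import Mathlib

open Polynomial Finset Matrix

lemma dickson_monic_deg : ∀ n : ℕ, ((dickson 1 1 (n+1) : ℂ[X]).Monic ∧ (dickson 1 1 (n+1) : ℂ[X]).natDegree = n + 1)
  | 0 => by simp [monic_X]
  | 1 => by
      have h : (dickson 1 1 2 : ℂ[X]) = X ^ 2 - Polynomial.C 2 := by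
        rw [dickson_two]
        norm_num
        exact_mod_cast (Polynomial.C_eq_natCast 2).symm
      constructor
      · rw [h]; exact monic_X_pow_sub_C _ (by norm_num)
      · rw [h, natDegree_X_pow_sub_C]
  | (n+2) => by
      obtain ⟨h1m, h1d⟩ := dickson_monic_deg (n+1)
      obtain ⟨h0m, h0d⟩ := dickson_monic_deg n
      have hrec : (dickson 1 1 (n+3) : ℂ[X]) = X * dickson 1 1 (n+2) - Polynomial.C 1 * dickson 1 1 (n+1) := dickson_add_two 1 1 (n+1)
      have hXm : ((X : ℂ[X]) * dickson 1 1 (n+2)).Monic := monic_X.mul h1m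
      have hXd : ((X : ℂ[X]) * dickson 1 1 (n+2)).natDegree = n + 3 := by
        rw [natDegree_mul X_ne_zero h1m.ne_zero, natDegree_X, h1d]; omega
      have hdlt : (-(Polynomial.C (1:ℂ) * dickson 1 1 (n+1))).degree < ((X : ℂ[X]) * dickson 1 1 (n+2)).degree := by
        rw [degree_neg, Polynomial.C_1, one_mul, degree_eq_natDegree h0m.ne_zero,
          degree_eq_natDegree hXm.ne_zero, hXd, h0d]
        exact Nat.cast_lt.mpr (by omega)
      rw [hrec, sub_eq_add_neg]
      refine ⟨hXm.add_of_left hdlt, ?_⟩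
      rw [natDegree_eq_of_degree_eq (degree_add_eq_left_of_degree_lt hdlt), hXd]

noncomputable def qB (a : ℕ) : ℂ[X] := 1 + ∑ m ∈ Finset.Icc 1 a, dickson 1 1 m

lemma qB_succ (a : ℕ) : qB (a+1) = qB a + dickson 1 1 (a+1) := by
  unfold qB
  rw [show Finset.Icc 1 (a+1) = insert (a+1) (Finset.Icc 1 a) by
    ext m; simp [Finset.mem_Icc, Finset.mem_insert]; omega]
  rw [Finset.sum_insert (by simp)]
  ring

lemma qB_monic_deg (a : ℕ) : (qB a).Monic ∧ (qB a).natDegree = a := by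
  induction a with
  | zero => simp [qB, monic_one]
  | succ a ih =>
    obtain ⟨hm, hd⟩ := ih
    obtain ⟨hdm, hdd⟩ := dickson_monic_deg a
    have hlt : (qB a).degree < (dickson 1 1 (a+1) : ℂ[X]).degree := by
      rw [degree_eq_natDegree hdm.ne_zero, hdd]
      exact lt_of_le_of_lt degree_le_natDegree (by rw [hd]; exact Nat.cast_lt.mpr (by omega))
    rw [qB_succ, add_comm]
    refine ⟨hdm.add_of_left hlt, ?_⟩
    rw [natDegree_eq_of_degree_eq (degree_add_eq_left_of_degree_lt hlt), hdd]

lemma qB_eval (a : ℕ) {x : ℂ} (hx : x ≠ 0) :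
    x ^ a * (qB a).eval (x + x⁻¹) = ∑ i ∈ Finset.range (2*a+1), x ^ i := by
  induction a with
  | zero => simp [qB]
  | succ a ih =>
    have hd := dickson_one_one_eval_add_inv x x⁻¹ (mul_inv_cancel₀ hx) (a+1)
    have hone : x ^ (a+1) * x⁻¹ ^ (a+1) = 1 := by
      rw [← mul_pow, mul_inv_cancel₀ hx, one_pow]
    have h1 : x ^ (a+1) * (x ^ (a+1) + x⁻¹ ^ (a+1)) = x ^ (2*(a+1)) + 1 := by
      rw [mul_add, hone, ← pow_add]
      congr 2
      omega
    have h2 : x ^ (a+1) * (qB a).eval (x + x⁻¹) = x * ∑ i ∈ Finset.range (2*a+1), x ^ i := by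
      rw [← ih, pow_succ]; ring
    have hsum : ∑ i ∈ Finset.range (2*(a+1)+1), x ^ i
        = x * (∑ i ∈ Finset.range (2*a+1), x ^ i) + (x ^ (2*(a+1)) + 1) := by
      rw [show 2*(a+1)+1 = (2*a+2)+1 by omega, Finset.sum_range_succ' _ (2*a+2),
        Finset.sum_range_succ]
      simp only [pow_succ']
      rw [← Finset.mul_sum]
      ring
    rw [qB_succ, eval_add, hd, mul_add, h2, h1, hsum]

lemma prod_Ioi_rev {N : ℕ} (f : Fin N → Fin N → ℂ) :
    ∏ i : Fin N, ∏ j ∈ Finset.Ioi i, f (Fin.rev j) (Fin.rev i)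
      = ∏ i : Fin N, ∏ j ∈ Finset.Ioi i, f i j := by
  rw [Finset.prod_sigma', Finset.prod_sigma']
  refine Finset.prod_bij' (fun p _ => ⟨p.2.rev, p.1.rev⟩) (fun p _ => ⟨p.2.rev, p.1.rev⟩)
    ?_ ?_ ?_ ?_ ?_
  · rintro ⟨i, j⟩ h
    simp only [Finset.mem_sigma, Finset.mem_univ, Finset.mem_Ioi, true_and] at h ⊢
    exact Fin.rev_lt_rev.mpr h
  · rintro ⟨i, j⟩ h
    simp only [Finset.mem_sigma, Finset.mem_univ, Finset.mem_Ioi, true_and] at h ⊢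
    exact Fin.rev_lt_rev.mpr h
  · rintro ⟨i, j⟩ h; simp [Fin.rev_rev]
  · rintro ⟨i, j⟩ h; simp [Fin.rev_rev]
  · rintro ⟨i, j⟩ h; simp

lemma prod_pairs_eq {N : ℕ} (z : Fin N → ℂ) :
    ∏ i : Fin N, ∏ j ∈ Finset.Ioi i, (z i * z j) = ∏ k : Fin N, z k ^ (N - 1) := by
  have hswap : ∏ i : Fin N, ∏ j ∈ Finset.Ioi i, z j
      = ∏ j : Fin N, ∏ _i ∈ Finset.Iio j, z j := by
    apply Finset.prod_comm'
    intro i j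
    simp [Finset.mem_Ioi, Finset.mem_Iio]
  calc ∏ i : Fin N, ∏ j ∈ Finset.Ioi i, (z i * z j)
      = (∏ i : Fin N, ∏ _j ∈ Finset.Ioi i, z i) * ∏ i : Fin N, ∏ j ∈ Finset.Ioi i, z j := by
        rw [← Finset.prod_mul_distrib]
        exact Finset.prod_congr rfl fun i _ => Finset.prod_mul_distrib
    _ = (∏ i : Fin N, z i ^ (N - 1 - (i : ℕ))) * ∏ j : Fin N, z j ^ (j : ℕ) := by
        rw [hswap]
        congr 1
        · exact Finset.prod_congr rfl fun i _ => by rw [Finset.prod_const, Fin.card_Ioi]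
        · exact Finset.prod_congr rfl fun j _ => by rw [Finset.prod_const, Fin.card_Iio]
    _ = ∏ k : Fin N, z k ^ (N - 1) := by
        rw [← Finset.prod_mul_distrib]
        refine Finset.prod_congr rfl fun i _ => ?_
        rw [← pow_add]
        congr 1
        have := i.isLt
        omega

lemma entry_key {N : ℕ} (hN : 0 < N) (j : Fin N) {x : ℂ} (hx : x ≠ 0) :
    x ^ (((j:ℕ):ℤ) + 1 - (N:ℤ)) - x ^ ((N:ℤ) + 1 - (((j:ℕ):ℤ) + 1))
    = (x ^ ((1:ℤ) - (N:ℤ)) * ((1 - x) * x ^ (N-1))) * (qB (N-1-(j:ℕ))).eval (x + x⁻¹) := by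
  have hj : (j:ℕ) ≤ N - 1 := by have := j.isLt; omega
  set a := N - 1 - (j:ℕ) with ha
  have hS : (1 - x) * (x ^ a * (qB a).eval (x + x⁻¹)) = 1 - x ^ (2*a+1) := by
    rw [qB_eval a hx]
    linear_combination -geom_sum_mul x (2*a+1)
  have hpow : x ^ (N-1:ℕ) = x ^ (j:ℕ) * x ^ a := by
    rw [← pow_add]; congr 1; omega
  have main2 : (x ^ ((1:ℤ) - (N:ℤ)) * ((1 - x) * x ^ (N-1))) * (qB a).eval (x + x⁻¹)
      = x ^ ((1:ℤ) - (N:ℤ)) * (x ^ (j:ℕ) - x ^ ((j:ℕ) + (2*a+1))) := by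
    rw [hpow]
    calc (x ^ ((1:ℤ) - (N:ℤ)) * ((1 - x) * (x ^ (j:ℕ) * x ^ a))) * (qB a).eval (x + x⁻¹)
        = x ^ ((1:ℤ) - (N:ℤ)) * (x ^ (j:ℕ) * ((1 - x) * (x ^ a * (qB a).eval (x + x⁻¹)))) := by
          ring
      _ = x ^ ((1:ℤ) - (N:ℤ)) * (x ^ (j:ℕ) - x ^ ((j:ℕ) + (2*a+1))) := by
          rw [hS, pow_add]; ring
  rw [main2, mul_sub, ← zpow_natCast x ((j:ℕ)), ← zpow_natCast x ((j:ℕ) + (2*a+1)),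
    ← zpow_add₀ hx, ← zpow_add₀ hx]
  congr 2
  · omega
  · push_cast [ha, Nat.cast_sub hj, Nat.cast_sub (show 1 ≤ N by omega)]
    ring

/-- Type B_N Weyl denominator formula: for nonzero `z₁, …, z_N`,
`det( z_k^{j-N} − z_k^{N+1-j} ) = ∏_ℓ z_ℓ^{1-N} (1 − z_ℓ) ·
∏_{j<k} (z_k − z_j)(1 − z_j z_k)`, indices `j, k` running over `1, …, N`. -/
theorem weyl_denominator_B (N : ℕ) (z : Fin N → ℂ) (hz : ∀ ℓ, z ℓ ≠ 0) :
    Matrix.det (Matrix.of fun j k : Fin N =>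
        z k ^ (((j : ℕ) : ℤ) + 1 - (N : ℤ)) -
          z k ^ ((N : ℤ) + 1 - (((j : ℕ) : ℤ) + 1))) =
      (∏ ℓ : Fin N, z ℓ ^ (1 - (N : ℤ)) * (1 - z ℓ)) *
        ∏ j : Fin N, ∏ k ∈ Finset.Ioi j, (z k - z j) * (1 - z j * z k) := by
  obtain rfl | hN := Nat.eq_zero_or_pos N
  · simp
  set t : Fin N → ℂ := fun k => z k + (z k)⁻¹ with ht
  set Q : Matrix (Fin N) (Fin N) ℂ :=
    Matrix.of fun j k : Fin N => (qB (N - 1 - (j:ℕ))).eval (t k) with hQ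
  have hfact : (Matrix.of fun j k : Fin N =>
        z k ^ (((j : ℕ) : ℤ) + 1 - (N : ℤ)) -
          z k ^ ((N : ℤ) + 1 - (((j : ℕ) : ℤ) + 1)))
      = Matrix.of fun j k : Fin N =>
          (fun k => z k ^ ((1:ℤ) - (N:ℤ)) * ((1 - z k) * z k ^ (N-1))) k * Q j k := by
    ext j k
    exact entry_key hN j (hz k)
  rw [hfact, Matrix.det_mul_row]
  have hdetQ : Q.det = ∏ i : Fin N, ∏ j ∈ Finset.Ioi i, (t i - t j) := by
    have h1 : (Q.submatrix (⇑(Fin.revPerm : Equiv.Perm (Fin N))) ⇑(Fin.revPerm : Equiv.Perm (Fin N))).det = Q.det :=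
      Matrix.det_submatrix_equiv_self Fin.revPerm Q
    have h2 : Q.submatrix (⇑(Fin.revPerm : Equiv.Perm (Fin N))) ⇑(Fin.revPerm : Equiv.Perm (Fin N))
        = (Matrix.of fun i j : Fin N => (qB ((j:ℕ))).eval ((fun i => t (Fin.rev i)) i))ᵀ := by
      ext j k
      simp only [Matrix.submatrix_apply, Matrix.transpose_apply, Matrix.of_apply, hQ,
        Fin.revPerm_apply]
      have : N - 1 - ((Fin.rev j : Fin N) : ℕ) = (j:ℕ) := by
        rw [Fin.val_rev]; have := j.isLt; omega
      rw [this]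
    rw [← h1, h2, Matrix.det_transpose,
      ← Matrix.det_eval_matrixOfPolynomials_eq_det_vandermonde (fun i => t (Fin.rev i))
        (fun i => qB (i:ℕ)) (fun i => (qB_monic_deg (i:ℕ)).2) (fun i => (qB_monic_deg (i:ℕ)).1),
      Matrix.det_vandermonde]
    exact prod_Ioi_rev fun a b => t a - t b
  rw [hdetQ]
  have hsplit : ∏ k : Fin N, z k ^ ((1:ℤ) - (N:ℤ)) * ((1 - z k) * z k ^ (N-1))
      = (∏ k : Fin N, z k ^ ((1:ℤ) - (N:ℤ)) * (1 - z k)) * ∏ k : Fin N, z k ^ (N-1) := by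
    rw [← Finset.prod_mul_distrib]
    exact Finset.prod_congr rfl fun k _ => by ring
  rw [hsplit, mul_assoc]
  congr 1
  calc (∏ k : Fin N, z k ^ (N-1)) * ∏ i : Fin N, ∏ j ∈ Finset.Ioi i, (t i - t j)
      = (∏ i : Fin N, ∏ j ∈ Finset.Ioi i, (z i * z j)) * ∏ i : Fin N, ∏ j ∈ Finset.Ioi i, (t i - t j) := by
        rw [prod_pairs_eq]
    _ = ∏ i : Fin N, ∏ j ∈ Finset.Ioi i, (z i * z j * (t i - t j)) := by
        rw [← Finset.prod_mul_distrib]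
        exact Finset.prod_congr rfl fun i _ => Finset.prod_mul_distrib.symm
    _ = ∏ i : Fin N, ∏ j ∈ Finset.Ioi i, (z j - z i) * (1 - z i * z j) := by
        refine Finset.prod_congr rfl fun i _ => Finset.prod_congr rfl fun j _ => ?_
        have hi := hz i; have hj := hz j
        simp only [ht]
        field_simp
        ring
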